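/- arXiv:1902.05906 — 2 statements merged into one kernel-verified Lean document; each statement's English description precedes it below -/
import Mathlib

section
/- Let h₀ and h₁ be inner functions on 𝔻. Suppose that for each integer k ≥ 0 there exists an inner function g_k such that g_k · h₀^k = h₁^k · h₀ (as holomorphic functions on 𝔻), i.e., h₀·(h₁/h₀)^k is an inner function for each k ≥ 0. Then there exists an inner function q such that q · h₀ = h₁, i.e., h₁/h₀ is an inner function. -/
open Complex MeasureTheory Filter Set Metric

noncomputable section

/-- The open unit disk in `ℂ`. -/
def unitDisk : Set ℂ := Metric.ball (0 : ℂ) 1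

/-- `h` is an inner function on the unit disk: it is holomorphic and bounded on `𝔻`,
and for a.e. `t` the radial limit `lim_{r→1⁻} h(r e^{it})` exists and has modulus `1`. -/
def IsInner (h : ℂ → ℂ) : Prop :=
  DifferentiableOn ℂ h unitDisk ∧
  (∃ C : ℝ, ∀ z ∈ unitDisk, ‖h z‖ ≤ C) ∧
  ∀ᵐ t : ℝ ∂volume, ∃ L : ℂ, ‖L‖ = 1 ∧
    Filter.Tendsto (fun r : ℝ => h ((r : ℂ) * Complex.exp (t * Complex.I)))
      (nhdsWithin 1 (Set.Iio 1)) (nhds L)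

/-- A single Blaschke factor: `z` if `a = 0`, and `(|a|/a)·(a − z)/(1 − conj a · z)` otherwise. -/
def blaschkeFactor (a : ℂ) (z : ℂ) : ℂ :=
  if a = 0 then z
  else ((‖a‖ : ℂ) / a) * ((a - z) / (1 - (starRingEnd ℂ) a * z))

/-- `B` coincides on the unit disk with a finite Blaschke product
`c · ∏ (|aₙ|/aₙ)(aₙ − z)/(1 − conj aₙ · z)` with `|c| = 1` and all `aₙ ∈ 𝔻`. -/
def IsFiniteBlaschke (B : ℂ → ℂ) : Prop :=
  ∃ (c : ℂ) (N : ℕ) (a : Fin N → ℂ),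
    ‖c‖ = 1 ∧ (∀ n, a n ∈ unitDisk) ∧
    ∀ z ∈ unitDisk, B z = c * ∏ n, blaschkeFactor (a n) z

/-- `g` is an outer function on the unit disk. -/
def IsOuter (g : ℂ → ℂ) : Prop :=
  DifferentiableOn ℂ g unitDisk ∧
  ∃ G : ℝ → ℝ, (∀ t, 0 ≤ G t) ∧
    IntervalIntegrable (fun t => Real.log (G t)) volume 0 (2 * Real.pi) ∧
    ∀ z ∈ unitDisk,
      g z = Complex.exp ((1 / (2 * Real.pi) : ℂ) *
        ∫ t in (0:ℝ)..(2 * Real.pi),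
          ((Complex.exp (t * Complex.I) + z) / (Complex.exp (t * Complex.I) - z)) *
            (Real.log (G t) : ℂ))

/-- The Smirnov class `N⁺`: the zero function together with all products of an
inner function and an outer function. -/
def MemSmirnov (f : ℂ → ℂ) : Prop :=
  (∀ z ∈ unitDisk, f z = 0) ∨
  ∃ h g : ℂ → ℂ, IsInner h ∧ IsOuter g ∧ ∀ z ∈ unitDisk, f z = h z * g z

open Topology

def Pker (r : ℝ) (z : ℂ) (t : ℝ) : ℝ :=
  (r ^ 2 - ‖z‖ ^ 2) / ‖circleMap 0 r t - z‖ ^ 2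

variable {r : ℝ} {z : ℂ}

lemma circleMap_ne (hz : ‖z‖ < r) (t : ℝ) :
    circleMap 0 r t - z ≠ 0 := by
  intro h
  rw [sub_eq_zero] at h
  have := norm_circleMap_zero r t
  rw [h] at this
  rw [this] at hz
  exact absurd hz (not_lt.2 (le_abs_self r))

lemma key_alg (hr0 : 0 < r) (hz : ‖z‖ < r) (t : ℝ)
    (hden : ((r:ℂ)^2 - (starRingEnd ℂ) z * circleMap 0 r t) ≠ 0) :
    (circleMap 0 r t) * ((circleMap 0 r t - z)⁻¹
        + (starRingEnd ℂ) z * ((r:ℂ)^2 - (starRingEnd ℂ) z * circleMap 0 r t)⁻¹)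
      = ((Pker r z t : ℝ) : ℂ) := by
  set w := circleMap 0 r t with hw
  have hwz : w - z ≠ 0 := circleMap_ne hz t
  have hwzc : (starRingEnd ℂ) w - (starRingEnd ℂ) z ≠ 0 := by
    have hne : w ≠ z := sub_ne_zero.1 hwz
    exact sub_ne_zero.2 fun h => hne (star_injective h)
  have hww : (starRingEnd ℂ) w * w = (r:ℂ)^2 := by
    rw [mul_comm, Complex.mul_conj]
    rw [Complex.normSq_eq_norm_sq, norm_circleMap_zero, abs_of_pos hr0]
    push_cast
    ring
  have h1 : ((‖z‖ ^ 2 : ℝ) : ℂ) = z * (starRingEnd ℂ) z := by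
    rw [← Complex.normSq_eq_norm_sq, Complex.mul_conj]
  have h2 : ((‖w - z‖ ^ 2 : ℝ) : ℂ)
      = (w - z) * ((starRingEnd ℂ) w - (starRingEnd ℂ) z) := by
    rw [← Complex.normSq_eq_norm_sq, ← map_sub, Complex.mul_conj]
  have hP : ((Pker r z t : ℝ) : ℂ)
      = ((starRingEnd ℂ) w * w - z * (starRingEnd ℂ) z)
        / ((w - z) * ((starRingEnd ℂ) w - (starRingEnd ℂ) z)) := by
    rw [Pker, Complex.ofReal_div, Complex.ofReal_sub, Complex.ofReal_pow, h1, h2, ← hww]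
  have hden' : (starRingEnd ℂ) w * w - (starRingEnd ℂ) z * w ≠ 0 := by
    rw [hww]; exact hden
  have hw0 : w ≠ 0 := norm_ne_zero_iff.mp (by rw [hw, norm_circleMap_zero]; exact (abs_pos.mpr hr0.ne').ne')
  rw [hP, ← hww]
  field_simp
  ring


lemma poisson_formula (f : ℂ → ℂ) (hf : DifferentiableOn ℂ f (ball (0:ℂ) 1))
    (hr0 : 0 < r) (hr1 : r < 1) (hz : ‖z‖ < r) :
    (2 * Real.pi : ℂ) * f z
      = ∫ t in (0:ℝ)..(2 * Real.pi), ((Pker r z t : ℝ) : ℂ) * f (circleMap 0 r t) := by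
  have hzball : z ∈ ball (0:ℂ) r := by simpa using hz
  have hsub : closedBall (0:ℂ) r ⊆ ball (0:ℂ) 1 := closedBall_subset_ball hr1
  have hfc : ContinuousOn f (closedBall (0:ℂ) r) := (hf.continuousOn).mono hsub
  have hfd : ∀ x ∈ ball (0:ℂ) r, DifferentiableAt ℂ f x := fun x hx =>
    hf.differentiableAt (isOpen_ball.mem_nhds (hsub (ball_subset_closedBall hx)))
  have hden : ∀ w ∈ closedBall (0:ℂ) r, ((r:ℂ)^2 - (starRingEnd ℂ) z * w) ≠ 0 := by
    intro w hw heq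
    have hw' : ‖w‖ ≤ r := by simpa using hw
    have h1 : ‖(r:ℂ)^2‖ = r^2 := by
      simp [norm_pow, abs_of_pos hr0]
    have h2 : ‖(starRingEnd ℂ) z * w‖ < r^2 := by
      rw [norm_mul, Complex.norm_conj]
      calc ‖z‖ * ‖w‖ ≤ ‖z‖ * r :=
            mul_le_mul_of_nonneg_left hw' (norm_nonneg z)
        _ < r * r := mul_lt_mul_of_pos_right hz hr0
        _ = r ^ 2 := by ring
    rw [sub_eq_zero] at heq
    rw [heq] at h1
    exact absurd h1 (ne_of_lt h2)
  have E1 : (∮ w in C(0, r), (w - z)⁻¹ • f w) = (2 * Real.pi * I : ℂ) • f z :=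
    Complex.circleIntegral_sub_inv_smul_of_differentiable_on_off_countable
      countable_empty hzball hfc (fun x hx => hfd x hx.1)
  have E2 : (∮ w in C(0, r), ((starRingEnd ℂ) z * ((r:ℂ)^2 - (starRingEnd ℂ) z * w)⁻¹) • f w)
      = 0 := by
    apply Complex.circleIntegral_eq_zero_of_differentiable_on_off_countable hr0.le
      (countable_empty) ?_ ?_
    · apply ContinuousOn.fun_smul ?_ hfc
      apply ContinuousOn.mul continuousOn_const
      apply ContinuousOn.inv₀ (Continuous.continuousOn (by continuity)) hden
    · intro x hx
      apply DifferentiableAt.fun_smul ?_ (hfd x hx.1)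
      apply DifferentiableAt.mul (differentiableAt_const _)
      apply DifferentiableAt.inv
      · fun_prop
      · exact hden x (ball_subset_closedBall hx.1)
  rw [circleIntegral] at E1 E2
  simp only [deriv_circleMap, smul_eq_mul] at E1 E2
  have hfcm : Continuous fun t => f (circleMap 0 r t) :=
    hfc.comp_continuous (continuous_circleMap 0 r) (fun t => circleMap_mem_closedBall 0 hr0.le t)
  have hA : IntervalIntegrable
      (fun t => circleMap 0 r t * I * ((circleMap 0 r t - z)⁻¹ * f (circleMap 0 r t)))
      volume 0 (2 * Real.pi) := by
    apply Continuous.intervalIntegrable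
    exact ((continuous_circleMap 0 r).mul continuous_const).mul
      ((((continuous_circleMap 0 r).sub continuous_const).inv₀
        (fun t => circleMap_ne hz t)).mul hfcm)
  have hB : IntervalIntegrable
      (fun t => circleMap 0 r t * I *
        ((starRingEnd ℂ) z * ((r:ℂ)^2 - (starRingEnd ℂ) z * circleMap 0 r t)⁻¹
          * f (circleMap 0 r t)))
      volume 0 (2 * Real.pi) := by
    apply Continuous.intervalIntegrable
    apply ((continuous_circleMap 0 r).mul continuous_const).mul
    apply Continuous.mul ?_ hfcm
    apply Continuous.mul continuous_const
    apply Continuous.inv₀ (by continuity)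
    exact fun t => hden _ (circleMap_mem_closedBall 0 hr0.le t)
  have E3 : (∫ t in (0:ℝ)..(2 * Real.pi),
        I * (((Pker r z t : ℝ) : ℂ) * f (circleMap 0 r t)))
      = 2 * Real.pi * I * f z := by
    rw [show (fun t => I * (((Pker r z t : ℝ) : ℂ) * f (circleMap 0 r t)))
        = (fun t => circleMap 0 r t * I * ((circleMap 0 r t - z)⁻¹ * f (circleMap 0 r t))
          + circleMap 0 r t * I *
            ((starRingEnd ℂ) z * ((r:ℂ)^2 - (starRingEnd ℂ) z * circleMap 0 r t)⁻¹
              * f (circleMap 0 r t))) from ?_]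
    · rw [intervalIntegral.integral_add hA hB, E1, E2, add_zero]
    · funext t
      rw [← key_alg hr0 hz t (hden _ (circleMap_mem_closedBall 0 hr0.le t))]
      ring
  rw [intervalIntegral.integral_const_mul] at E3
  exact (mul_left_cancel₀ I_ne_zero (E3.trans (by ring))).symm

lemma Pker_nonneg (hz : ‖z‖ ≤ r) (t : ℝ) : 0 ≤ Pker r z t := by
  apply div_nonneg
  · have := norm_nonneg z
    nlinarith
  · positivity

lemma abs_circleMap_sub_ge (t : ℝ) (hr0 : 0 < r) :
    r - ‖z‖ ≤ ‖circleMap 0 r t - z‖ := by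
  have h1 := norm_sub_norm_le (circleMap 0 r t) z
  calc r - ‖z‖ = ‖circleMap 0 r t‖ - ‖z‖ := by
        rw [norm_circleMap_zero, _root_.abs_of_pos hr0]
    _ ≤ _ := h1

lemma Pker_le (hz : ‖z‖ < r) (hr0 : 0 < r) (hr1 : r ≤ 1) (t : ℝ) :
    Pker r z t ≤ ((r - ‖z‖) ^ 2)⁻¹ := by
  have h1 := abs_circleMap_sub_ge (z := z) t hr0
  have h2 : (0:ℝ) < r - ‖z‖ := by linarith
  rw [Pker, div_eq_mul_inv]
  have h3 : ((‖circleMap 0 r t - z‖) ^ 2)⁻¹ ≤ ((r - ‖z‖) ^ 2)⁻¹ := by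
    apply inv_anti₀ (by positivity)
    exact pow_le_pow_left₀ h2.le h1 2
  have h4 : r ^ 2 - ‖z‖ ^ 2 ≤ 1 := by
    have := norm_nonneg z
    nlinarith
  have h5 : 0 ≤ r ^ 2 - ‖z‖ ^ 2 := by nlinarith [norm_nonneg z]
  calc (r ^ 2 - ‖z‖ ^ 2) * ((‖circleMap 0 r t - z‖) ^ 2)⁻¹
      ≤ 1 * ((r - ‖z‖) ^ 2)⁻¹ := by
        apply mul_le_mul h4 h3 (by positivity) (by norm_num)
    _ = ((r - ‖z‖) ^ 2)⁻¹ := one_mul _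

lemma poisson_abs_le (f : ℂ → ℂ) (hf : DifferentiableOn ℂ f (ball (0:ℂ) 1))
    (hr0 : 0 < r) (hr1 : r < 1) (hz : ‖z‖ < r) :
    2 * Real.pi * ‖f z‖
      ≤ ∫ t in (0:ℝ)..(2 * Real.pi), Pker r z t * ‖f (circleMap 0 r t)‖ := by
  have h0 := poisson_formula f hf hr0 hr1 hz
  have h1 : 2 * Real.pi * ‖f z‖
      = ‖(2 * Real.pi : ℂ) * f z‖ := by
    rw [norm_mul]
    congr 1
    simp [abs_of_pos Real.pi_pos]
  rw [h1, h0]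
  have h2 : ‖∫ t in (0:ℝ)..(2 * Real.pi),
        ((Pker r z t : ℝ) : ℂ) * f (circleMap 0 r t)‖
      ≤ ∫ t in (0:ℝ)..(2 * Real.pi), ‖((Pker r z t : ℝ) : ℂ) * f (circleMap 0 r t)‖ := by
    exact intervalIntegral.norm_integral_le_integral_norm (by positivity)
  refine h2.trans_eq (intervalIntegral.integral_congr fun t _ => ?_)
  rw [norm_mul, Complex.norm_real, Real.norm_eq_abs,
    _root_.abs_of_nonneg (Pker_nonneg hz.le t)]

lemma pker_tendsto (hz : ‖z‖ < 1) (t : ℝ) :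
    Tendsto (fun ρ : ℝ => Pker ρ z t) (𝓝[<] (1:ℝ)) (𝓝 (Pker 1 z t)) := by
  have h1 : circleMap 0 1 t - z ≠ 0 := circleMap_ne hz t
  have : ContinuousAt (fun ρ : ℝ => Pker ρ z t) 1 := by
    apply ContinuousAt.div
    · fun_prop
    · have hc : Continuous (fun ρ : ℝ => ‖circleMap 0 ρ t - z‖ ^ 2) := by
        simp only [circleMap, zero_add]
        exact ((continuous_norm.comp
          ((Complex.continuous_ofReal.mul continuous_const).sub continuous_const)).pow 2)
      exact hc.continuousAt
    · simp only [ne_eq, OfNat.ofNat_ne_zero, not_false_eq_true, pow_eq_zero_iff]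
      simpa [sub_eq_zero] using h1
  exact this.continuousWithinAt

lemma circleMap_eq (ρ t : ℝ) : circleMap 0 ρ t = (ρ:ℂ) * Complex.exp ((t:ℂ) * I) := by
  simp [circleMap]

lemma inner_bound_one {f : ℂ → ℂ} (hd : DifferentiableOn ℂ f (ball (0:ℂ) 1))
    {C : ℝ} (hb : ∀ z ∈ ball (0:ℂ) 1, ‖f z‖ ≤ C)
    (hlim : ∀ᵐ t : ℝ ∂volume, ∃ L : ℂ, ‖L‖ = 1 ∧
      Tendsto (fun ρ : ℝ => f ((ρ : ℂ) * Complex.exp ((t:ℂ) * I))) (𝓝[<] (1:ℝ)) (𝓝 L)) :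
    ∀ z ∈ ball (0:ℂ) 1, ‖f z‖ ≤ 1 := by
  intro z hz
  have ha : ‖z‖ < 1 := by simpa using hz
  set a := ‖z‖ with haa
  have ha0 : 0 ≤ a := norm_nonneg z
  set r₀ : ℝ := (1 + a) / 2 with hr₀
  have har₀ : a < r₀ := by rw [hr₀]; linarith
  have hr₀1 : r₀ < 1 := by rw [hr₀]; linarith
  have hr₀0 : 0 < r₀ := by rw [hr₀]; linarith
  set M : ℝ := ((r₀ - a) ^ 2)⁻¹ with hM
  have hM0 : 0 < M := by
    rw [hM]
    have : 0 < r₀ - a := by linarith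
    positivity
  have hC0 : 0 ≤ C := le_trans (norm_nonneg _) (hb 0 (by simp))
  set l : Filter ℝ := 𝓝[<] (1:ℝ) with hldef
  have hEv : Ioo r₀ 1 ∈ l := Ioo_mem_nhdsLT hr₀1
  set L : ℝ → ℂ := fun t =>
    limUnder l (fun ρ : ℝ => f ((ρ : ℂ) * Complex.exp ((t:ℂ) * I))) with hLdef
  have hL : ∀ᵐ t : ℝ ∂volume, ‖L t‖ = 1 ∧
      Tendsto (fun ρ : ℝ => f ((ρ : ℂ) * Complex.exp ((t:ℂ) * I))) l (𝓝 (L t)) := by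
    filter_upwards [hlim] with t ht
    obtain ⟨L', h1, h2⟩ := ht
    have : L t = L' := h2.limUnder_eq
    rw [this]
    exact ⟨h1, h2⟩
  -- bound on Pker for ρ ∈ Ioo r₀ 1
  have hPb : ∀ ρ ∈ Ioo r₀ (1:ℝ), ∀ t : ℝ, Pker ρ z t ≤ M := by
    intro ρ hρ t
    have h1 : a < ρ := har₀.trans hρ.1
    have h2 := Pker_le h1 (hr₀0.trans hρ.1) hρ.2.le t
    refine h2.trans ?_
    rw [hM]
    have hra : 0 < r₀ - a := by linarith
    apply inv_anti₀ (by positivity)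
    have : r₀ - a ≤ ρ - a := by linarith [hρ.1]
    exact pow_le_pow_left₀ (by linarith) this 2
  have hmem : ∀ ρ ∈ Ioo r₀ (1:ℝ), ∀ t : ℝ, circleMap 0 ρ t ∈ ball (0:ℂ) 1 := by
    intro ρ hρ t
    simp only [mem_ball, dist_zero_right, norm_circleMap_zero]
    rw [_root_.abs_of_pos (hr₀0.trans hρ.1)]
    exact hρ.2
  have hcont : ∀ ρ ∈ Ioo r₀ (1:ℝ),
      Continuous (fun t => Pker ρ z t * ‖f (circleMap 0 ρ t)‖) := by
    intro ρ hρ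
    have h1 : a < ρ := har₀.trans hρ.1
    have hden : Continuous (fun t => ‖circleMap 0 ρ t - z‖ ^ 2) :=
      (continuous_norm.comp ((continuous_circleMap 0 ρ).sub continuous_const)).pow 2
    have hPc : Continuous (fun t => Pker ρ z t) := by
      apply Continuous.div continuous_const hden
      intro t
      exact pow_ne_zero 2 ((norm_ne_zero_iff.mpr (circleMap_ne (z := z) h1 t)))
    have hfc : Continuous (fun t => f (circleMap 0 ρ t)) :=
      hd.continuousOn.comp_continuous (continuous_circleMap 0 ρ) (hmem ρ hρ)
    exact hPc.mul (continuous_norm.comp hfc)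
  -- DCT for F
  have hDCT1 : Tendsto (fun ρ => ∫ t in (0:ℝ)..(2 * Real.pi),
        Pker ρ z t * ‖f (circleMap 0 ρ t)‖) l
      (𝓝 (∫ t in (0:ℝ)..(2 * Real.pi), Pker 1 z t * ‖L t‖)) := by
    apply intervalIntegral.tendsto_integral_filter_of_dominated_convergence (fun _ => M * C)
    · filter_upwards [hEv] with ρ hρ
      exact (hcont ρ hρ).aestronglyMeasurable
    · filter_upwards [hEv] with ρ hρ
      apply Eventually.of_forall
      intro t _
      have h1 : a < ρ := har₀.trans hρ.1
      have hp0 : 0 ≤ Pker ρ z t := Pker_nonneg h1.le t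
      rw [Real.norm_eq_abs, _root_.abs_of_nonneg
        (mul_nonneg hp0 (norm_nonneg _))]
      exact mul_le_mul (hPb ρ hρ t) (hb _ (hmem ρ hρ t)) (norm_nonneg _) hM0.le
    · exact intervalIntegrable_const
    · filter_upwards [hL] with t ht _
      have h2 : Tendsto (fun ρ : ℝ => ‖f (circleMap 0 ρ t)‖) l
          (𝓝 (‖L t‖)) := by
        have := (continuous_norm.tendsto (L t)).comp ht.2
        refine this.congr fun ρ => ?_
        simp [circleMap_eq]
      exact (pker_tendsto ha t).mul h2
  -- DCT for Pker alone
  have hDCT2 : Tendsto (fun ρ => ∫ t in (0:ℝ)..(2 * Real.pi), Pker ρ z t) l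
      (𝓝 (∫ t in (0:ℝ)..(2 * Real.pi), Pker 1 z t)) := by
    apply intervalIntegral.tendsto_integral_filter_of_dominated_convergence (fun _ => M)
    · filter_upwards [hEv] with ρ hρ
      have h1 : a < ρ := har₀.trans hρ.1
      have hden : Continuous (fun t => ‖circleMap 0 ρ t - z‖ ^ 2) :=
        (continuous_norm.comp ((continuous_circleMap 0 ρ).sub continuous_const)).pow 2
      have hPc : Continuous (fun t => Pker ρ z t) := by
        apply Continuous.div continuous_const hden
        intro t
        exact pow_ne_zero 2 ((norm_ne_zero_iff.mpr (circleMap_ne (z := z) h1 t)))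
      exact hPc.aestronglyMeasurable
    · filter_upwards [hEv] with ρ hρ
      apply Eventually.of_forall
      intro t _
      have h1 : a < ρ := har₀.trans hρ.1
      rw [Real.norm_eq_abs, _root_.abs_of_nonneg (Pker_nonneg h1.le t)]
      exact hPb ρ hρ t
    · exact intervalIntegrable_const
    · apply Eventually.of_forall
      intro t _
      exact pker_tendsto ha t
  -- the Poisson integral of the constant kernel is 2π
  have hconst : ∀ᶠ ρ in l, (∫ t in (0:ℝ)..(2 * Real.pi), Pker ρ z t) = 2 * Real.pi := by
    filter_upwards [hEv] with ρ hρ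
    have h1 : a < ρ := har₀.trans hρ.1
    have := poisson_formula (fun _ => (1:ℂ)) (differentiableOn_const 1)
      (hr₀0.trans hρ.1) hρ.2 h1
    simp only [mul_one] at this
    rw [intervalIntegral.integral_ofReal] at this
    exact_mod_cast this.symm
  have hP1 : (∫ t in (0:ℝ)..(2 * Real.pi), Pker 1 z t) = 2 * Real.pi :=
    tendsto_nhds_unique hDCT2 (tendsto_const_nhds.congr' (hconst.mono fun ρ h => h.symm))
  have hcongr : (∫ t in (0:ℝ)..(2 * Real.pi), Pker 1 z t * ‖L t‖)
      = ∫ t in (0:ℝ)..(2 * Real.pi), Pker 1 z t := by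
    apply intervalIntegral.integral_congr_ae
    filter_upwards [hL] with t ht _
    rw [ht.1, mul_one]
  have hineq : ∀ᶠ ρ in l, 2 * Real.pi * ‖f z‖
      ≤ ∫ t in (0:ℝ)..(2 * Real.pi), Pker ρ z t * ‖f (circleMap 0 ρ t)‖ := by
    filter_upwards [hEv] with ρ hρ
    exact poisson_abs_le f hd (hr₀0.trans hρ.1) hρ.2 (har₀.trans hρ.1)
  have hfinal : 2 * Real.pi * ‖f z‖ ≤ 2 * Real.pi := by
    have := ge_of_tendsto hDCT1 hineq
    rwa [hcongr, hP1] at this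
  nlinarith [Real.pi_pos]

lemma mem_disk_of {r t : ℝ} (h0 : 0 < r) (h1 : r < 1) :
    (r:ℂ) * Complex.exp ((t:ℂ) * I) ∈ ball (0:ℂ) 1 := by
  rw [mem_ball, dist_zero_right, norm_mul, Complex.norm_exp_ofReal_mul_I,
    mul_one, Complex.norm_real, Real.norm_eq_abs, _root_.abs_of_pos h0]
  exact h1

lemma inner_not_ev_zero {f : ℂ → ℂ} (hd : DifferentiableOn ℂ f (ball (0:ℂ) 1))
    (hl : ∀ᵐ t : ℝ ∂volume, ∃ L : ℂ, ‖L‖ = 1 ∧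
      Tendsto (fun ρ : ℝ => f ((ρ : ℂ) * Complex.exp ((t:ℂ) * I))) (𝓝[<] (1:ℝ)) (𝓝 L))
    {z₀ : ℂ} (hz₀ : z₀ ∈ ball (0:ℂ) 1) : ¬ (∀ᶠ z in 𝓝 z₀, f z = 0) := by
  intro hev
  have hA : AnalyticOnNhd ℂ f (ball (0:ℂ) 1) := fun z hz =>
    hd.analyticAt (isOpen_ball.mem_nhds hz)
  have hzero : EqOn f 0 (ball (0:ℂ) 1) :=
    hA.eqOn_zero_of_preconnected_of_eventuallyEq_zero
      ((convex_ball (0:ℂ) 1).isPreconnected) hz₀ hev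
  obtain ⟨t, L, hL1, hL2⟩ := hl.exists
  have h0 : Tendsto (fun ρ : ℝ => f ((ρ:ℂ) * Complex.exp ((t:ℂ) * I))) (𝓝[<] (1:ℝ)) (𝓝 0) := by
    apply tendsto_const_nhds.congr'
    filter_upwards [Ioo_mem_nhdsLT one_pos] with ρ hρ
    exact (hzero (mem_disk_of hρ.1 hρ.2)).symm
  have : L = 0 := tendsto_nhds_unique hL2 h0
  rw [this] at hL1
  simp at hL1

/-- **Lemma (division of inner functions).** Let `h₀, h₁` be inner. If for every `k ≥ 0`
the function `h₀ (h₁/h₀)^k` is inner (i.e. there is an inner `gₖ` with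
`gₖ · h₀^k = h₁^k · h₀` on `𝔻`), then `h₁/h₀` is inner (i.e. there is an inner `q` with
`q · h₀ = h₁` on `𝔻`). -/
theorem inner_quotient
    (h₀ h₁ : ℂ → ℂ) (hh₀ : IsInner h₀) (hh₁ : IsInner h₁)
    (h : ∀ k : ℕ, ∃ g : ℂ → ℂ, IsInner g ∧
      ∀ z ∈ unitDisk, g z * (h₀ z) ^ k = (h₁ z) ^ k * h₀ z) :
    ∃ q : ℂ → ℂ, IsInner q ∧ ∀ z ∈ unitDisk, q z * h₀ z = h₁ z := by

  choose g hg hgmul using h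
  obtain ⟨hd₀, ⟨C₀, hb₀⟩, hl₀⟩ := hh₀
  obtain ⟨hd₁, ⟨C₁, hb₁⟩, hl₁⟩ := hh₁
  have hDeq : unitDisk = ball (0:ℂ) 1 := rfl
  rw [hDeq] at hd₀ hb₀ hd₁ hb₁
  have hA₀ : AnalyticOnNhd ℂ h₀ (ball (0:ℂ) 1) := fun z hz =>
    hd₀.analyticAt (isOpen_ball.mem_nhds hz)
  have hA₁ : AnalyticOnNhd ℂ h₁ (ball (0:ℂ) 1) := fun z hz =>
    hd₁.analyticAt (isOpen_ball.mem_nhds hz)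
  have hg_le : ∀ k, ∀ z ∈ ball (0:ℂ) 1, ‖g k z‖ ≤ 1 := by
    intro k
    obtain ⟨hdk, ⟨Ck, hbk⟩, hlk⟩ := hg k
    exact inner_bound_one hdk hbk hlk
  have hh₀_le : ∀ z ∈ ball (0:ℂ) 1, ‖h₀ z‖ ≤ 1 := inner_bound_one hd₀ hb₀ hl₀
  have hgd : ∀ k, DifferentiableOn ℂ (g k) (ball (0:ℂ) 1) := fun k => (hg k).1
  -- local structure of h₁ / h₀
  have key : ∀ z₀ ∈ ball (0:ℂ) 1, ∃ G : ℂ → ℂ, AnalyticAt ℂ G z₀ ∧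
      (∀ᶠ w in 𝓝[≠] z₀, h₀ w ≠ 0 ∧ h₁ w / h₀ w = G w) ∧
      (h₀ z₀ = 0 → h₁ z₀ = 0) ∧ (h₀ z₀ ≠ 0 → G z₀ = h₁ z₀ / h₀ z₀) := by
    intro z₀ hz₀
    by_cases hne : h₀ z₀ = 0
    swap
    · refine ⟨fun w => h₁ w / h₀ w, (hA₁ z₀ hz₀).div (hA₀ z₀ hz₀) hne, ?_, ?_, fun _ => rfl⟩
      · have : ∀ᶠ w in 𝓝 z₀, h₀ w ≠ 0 :=
          ((hA₀ z₀ hz₀).continuousAt.eventually_ne hne)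
        filter_upwards [this.filter_mono nhdsWithin_le_nhds] with w hw
        exact ⟨hw, rfl⟩
      · intro h; exact absurd h hne
    -- h₀ z₀ = 0 case
    · have hmtop : analyticOrderAt h₀ z₀ ≠ ⊤ := fun htop =>
        inner_not_ev_zero hd₀ hl₀ hz₀ (analyticOrderAt_eq_top.mp htop)
      have hntop : analyticOrderAt h₁ z₀ ≠ ⊤ := fun htop =>
        inner_not_ev_zero hd₁ hl₁ hz₀ (analyticOrderAt_eq_top.mp htop)
      obtain ⟨m, hm⟩ := WithTop.ne_top_iff_exists.mp hmtop
      obtain ⟨n, hn⟩ := WithTop.ne_top_iff_exists.mp hntop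
      obtain ⟨u, huA, hu0, hufac⟩ := ((hA₀ z₀ hz₀).analyticOrderAt_eq_natCast (n := m)).mp hm.symm
      obtain ⟨v, hvA, hv0, hvfac⟩ := ((hA₁ z₀ hz₀).analyticOrderAt_eq_natCast (n := n)).mp hn.symm
      simp only [smul_eq_mul] at hufac hvfac
      have hm1 : 1 ≤ m := by
        rcases Nat.eq_zero_or_pos m with h0 | h1
        · exfalso
          have := hufac.self_of_nhds
          rw [h0, pow_zero, one_mul] at this
          exact hu0 (this ▸ hne)
        · exact h1
      -- m ≤ n
      have hnm : m ≤ n := by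
        by_contra hcon
        push_neg at hcon  -- n < m
        set k := m + 1 with hk
        have hlt : k * n + m < k * m := by
          calc k * n + m < k * n + k := by omega
            _ = k * (n + 1) := by ring
            _ ≤ k * m := Nat.mul_le_mul_left k (by omega)
        set d := k * m - (k * n + m) with hdd
        have hd : k * n + m + d = k * m := by omega
        have hd1 : 1 ≤ d := by omega
        -- eventual identity near z₀
        have hEv : ∀ᶠ w in 𝓝 z₀, g k w * ((w - z₀) ^ m * u w) ^ k
            = ((w - z₀) ^ n * v w) ^ k * ((w - z₀) ^ m * u w) := by
          filter_upwards [hufac, hvfac, isOpen_ball.eventually_mem hz₀] with w h1 h2 h3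
          rw [← h1, ← h2]
          exact hgmul k w h3
        have hEv' : ∀ᶠ w in 𝓝[≠] z₀,
            (w - z₀) ^ d * (g k w * u w ^ k) = v w ^ k * u w := by
          rw [eventually_nhdsWithin_iff]
          filter_upwards [hEv] with w hw hwne
          have hz : (w - z₀) ≠ 0 := sub_ne_zero.2 hwne
          have hpow : (w - z₀) ^ (k * n + m) ≠ 0 := pow_ne_zero _ hz
          apply mul_left_cancel₀ hpow
          have : (w - z₀) ^ (k * n + m) * ((w - z₀) ^ d * (g k w * u w ^ k))
              = g k w * ((w - z₀) ^ m * u w) ^ k := by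
            rw [mul_pow, ← pow_mul]
            rw [show (w - z₀) ^ (k * n + m) * ((w - z₀) ^ d * (g k w * u w ^ k))
                = (w - z₀) ^ (k * n + m + d) * (g k w * u w ^ k) by rw [pow_add]; ring]
            rw [hd]
            ring
          rw [this, hw]
          rw [mul_pow, ← pow_mul, pow_add]
          ring
        -- limits
        have hgc : ContinuousAt (g k) z₀ :=
          ((hgd k).differentiableAt (isOpen_ball.mem_nhds hz₀)).continuousAt
        have T1 : Tendsto (fun w => (w - z₀) ^ d * (g k w * u w ^ k)) (𝓝[≠] z₀) (𝓝 0) := by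
          have : ContinuousAt (fun w => (w - z₀) ^ d * (g k w * u w ^ k)) z₀ := by
            exact (((continuous_id.sub continuous_const).pow d).continuousAt).mul
              (hgc.mul (huA.continuousAt.pow k))
          have h0 : (fun w => (w - z₀) ^ d * (g k w * u w ^ k)) z₀ = 0 := by
            simp [zero_pow (by omega : d ≠ 0)]
          rw [← h0]
          exact this.continuousWithinAt
        have T2 : Tendsto (fun w => (w - z₀) ^ d * (g k w * u w ^ k)) (𝓝[≠] z₀)
            (𝓝 (v z₀ ^ k * u z₀)) := by
          have : ContinuousAt (fun w => v w ^ k * u w) z₀ :=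
            (hvA.continuousAt.pow k).mul huA.continuousAt
          exact Tendsto.congr' (by filter_upwards [hEv'] with w hw; exact hw.symm)
            this.continuousWithinAt
        have : (0:ℂ) = v z₀ ^ k * u z₀ := tendsto_nhds_unique T1 T2
        exact hu0 (by
          have hvne : v z₀ ^ k ≠ 0 := pow_ne_zero _ hv0
          field_simp at this
          exact (mul_eq_zero.mp this.symm).resolve_left hvne)
      -- build G
      refine ⟨fun w => (w - z₀) ^ (n - m) * (v w / u w), ?_, ?_, ?_, fun hcon => absurd hne hcon⟩
      · exact ((analyticAt_id.sub analyticAt_const).pow _).mul (hvA.div huA hu0)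
      · have hune : ∀ᶠ w in 𝓝 z₀, u w ≠ 0 := huA.continuousAt.eventually_ne hu0
        rw [eventually_nhdsWithin_iff]
        filter_upwards [hufac, hvfac, hune] with w h1 h2 h3 hwne
        have hz : (w - z₀) ≠ 0 := sub_ne_zero.2 hwne
        constructor
        · rw [h1]
          exact mul_ne_zero (pow_ne_zero _ hz) h3
        · rw [h1, h2, show n = (n - m) + m by omega, pow_add]
          field_simp
          rw [Nat.add_sub_cancel]
          ring
      · intro _
        rw [hvfac.self_of_nhds, sub_self, zero_pow (by omega : n ≠ 0), zero_mul]
  -- construct q as the punctured limit of h₁ / h₀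
  set q : ℂ → ℂ := fun z => limUnder (𝓝[≠] z) (fun w => h₁ w / h₀ w) with hqdef
  have hFcont : ∀ w ∈ ball (0:ℂ) 1, h₀ w ≠ 0 →
      Tendsto (fun w' => h₁ w' / h₀ w') (𝓝[≠] w) (𝓝 (h₁ w / h₀ w)) := by
    intro w hw hw0
    have : ContinuousAt (fun w' => h₁ w' / h₀ w') w :=
      ((hd₁.differentiableAt (isOpen_ball.mem_nhds hw)).continuousAt.div
        ((hd₀.differentiableAt (isOpen_ball.mem_nhds hw)).continuousAt) hw0)
    exact this.continuousWithinAt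
  have hqF : ∀ w ∈ ball (0:ℂ) 1, h₀ w ≠ 0 → q w = h₁ w / h₀ w := by
    intro w hw hw0
    exact (hFcont w hw hw0).limUnder_eq
  have hqnear : ∀ z₀ ∈ ball (0:ℂ) 1, ∀ G : ℂ → ℂ, AnalyticAt ℂ G z₀ →
      (∀ᶠ w in 𝓝[≠] z₀, h₀ w ≠ 0 ∧ h₁ w / h₀ w = G w) → ∀ᶠ w in 𝓝 z₀, q w = G w := by
    intro z₀ hz₀ G hGA hGev
    have hGt : Tendsto (fun w => h₁ w / h₀ w) (𝓝[≠] z₀) (𝓝 (G z₀)) := by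
      apply Tendsto.congr' (f₁ := G)
      · filter_upwards [hGev] with w hw
        exact hw.2.symm
      · exact hGA.continuousAt.continuousWithinAt
    have hqz₀ : q z₀ = G z₀ := hGt.limUnder_eq
    rw [eventually_nhdsWithin_iff] at hGev
    filter_upwards [hGev, isOpen_ball.eventually_mem hz₀] with w hw hwD
    by_cases hwz : w = z₀
    · rw [hwz, hqz₀]
    · have hw' := hw (by simpa using hwz)
      rw [hqF w hwD hw'.1, hw'.2]
  have hqDiff : ∀ z ∈ ball (0:ℂ) 1, DifferentiableAt ℂ q z := by
    intro z hz
    obtain ⟨G, hGA, hGev, _, _⟩ := key z hz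
    exact hGA.differentiableAt.congr_of_eventuallyEq (hqnear z hz G hGA hGev)
  have hqmul : ∀ z ∈ ball (0:ℂ) 1, q z * h₀ z = h₁ z := by
    intro z hz
    by_cases hz0 : h₀ z = 0
    · obtain ⟨G, hGA, hGev, hG0, _⟩ := key z hz
      rw [hz0, mul_zero]
      exact (hG0 hz0).symm
    · rw [hqF z hz hz0]
      field_simp
  have hq1 : ∀ z ∈ ball (0:ℂ) 1, h₀ z ≠ 0 → ‖q z‖ ≤ 1 := by
    intro z hz hz0
    by_contra hgt
    push_neg at hgt
    have hpos : 0 < ‖h₀ z‖ := norm_pos_iff.mpr hz0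
    have hbound : ∀ k : ℕ, ‖q z‖ ^ k ≤ (‖h₀ z‖)⁻¹ := by
      intro k
      have e1 : g k z * h₀ z ^ k = h₁ z ^ k * h₀ z := hgmul k z hz
      have e2 : h₁ z = q z * h₀ z := (hqmul z hz).symm
      have e3 : g k z * h₀ z ^ k = (q z ^ k * h₀ z) * h₀ z ^ k := by
        rw [e1, e2]; ring
      have e4 : g k z = q z ^ k * h₀ z := mul_right_cancel₀ (pow_ne_zero k hz0) e3
      have e5 : ‖q z‖ ^ k * ‖h₀ z‖ ≤ 1 := by
        rw [← norm_pow, ← norm_mul, ← e4]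
        exact hg_le k z hz
      have : ‖q z‖ ^ k ≤ 1 / ‖h₀ z‖ := by
        rw [le_div_iff₀ hpos]
        exact e5
      simpa [one_div] using this
    obtain ⟨k, hk⟩ := ((tendsto_pow_atTop_atTop_of_one_lt hgt).eventually_gt_atTop
      ((‖h₀ z‖)⁻¹)).exists
    exact absurd (hbound k) (not_le.mpr hk)
  have hq_le : ∀ z ∈ ball (0:ℂ) 1, ‖q z‖ ≤ 1 := by
    intro z hz
    by_cases hz0 : h₀ z = 0
    · obtain ⟨G, hGA, hGev, _, _⟩ := key z hz
      have hct : Tendsto q (𝓝[≠] z) (𝓝 (q z)) :=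
        (hqDiff z hz).continuousAt.continuousWithinAt
      have htend : Tendsto (fun w => ‖q w‖) (𝓝[≠] z) (𝓝 (‖q z‖)) :=
        (continuous_norm.tendsto _).comp hct
      apply le_of_tendsto htend
      filter_upwards [hGev, (isOpen_ball.eventually_mem hz).filter_mono nhdsWithin_le_nhds]
        with w hw hwD
      exact hq1 w hwD hw.1
    · exact hq1 z hz hz0
  have hqa : ∀ᵐ t : ℝ ∂volume, ∃ L : ℂ, ‖L‖ = 1 ∧
      Tendsto (fun r : ℝ => q ((r:ℂ) * Complex.exp ((t:ℂ) * I))) (𝓝[<] (1:ℝ)) (𝓝 L) := by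
    filter_upwards [hl₀, hl₁] with t ht₀ ht₁
    obtain ⟨L₀, hL₀1, hL₀t⟩ := ht₀
    obtain ⟨L₁, hL₁1, hL₁t⟩ := ht₁
    have hL₀ne : L₀ ≠ 0 := by
      intro e
      rw [e] at hL₀1
      simp at hL₀1
    refine ⟨L₁ / L₀, ?_, ?_⟩
    · rw [norm_div, hL₀1, hL₁1]
      norm_num
    · have hdiv : Tendsto (fun r : ℝ => h₁ ((r:ℂ) * Complex.exp ((t:ℂ) * I))
            / h₀ ((r:ℂ) * Complex.exp ((t:ℂ) * I))) (𝓝[<] (1:ℝ)) (𝓝 (L₁ / L₀)) :=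
        hL₁t.div hL₀t hL₀ne
      apply Tendsto.congr' ?_ hdiv
      filter_upwards [Ioo_mem_nhdsLT one_pos, hL₀t.eventually_ne hL₀ne] with r hr hne0
      have hmem : (r:ℂ) * Complex.exp ((t:ℂ) * I) ∈ ball (0:ℂ) 1 := mem_disk_of hr.1 hr.2
      exact (hqF _ hmem hne0).symm
  exact ⟨q, ⟨fun z hz => (hqDiff z hz).differentiableWithinAt, ⟨1, hq_le⟩, hqa⟩, hqmul⟩
end
end

section
/- The set of finite Blaschke products is closed in the set of inner functions with respect to the H^∞ norm: if (B_n) is a sequence of finite Blaschke products, h is an inner function on 𝔻, and sup_{z ∈ 𝔻} |B_n(z) − h(z)| → 0 as n → ∞, then h is a finite Blaschke product. -/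
open Complex MeasureTheory Filter Set Metric

noncomputable section

/-! ### Auxiliary lemmas -/

lemma abs_sub_abs_le (x y : ℂ) :
    ‖x‖ - ‖y‖ ≤ ‖x - y‖ := by
  have := norm_sub_norm_le x y
  simpa using this

lemma mem_unitDisk_iff {z : ℂ} : z ∈ unitDisk ↔ ‖z‖ < 1 := by
  simp [unitDisk, Metric.mem_ball, Complex.dist_eq]

lemma isOpen_unitDisk : IsOpen unitDisk := isOpen_ball

lemma preconnected_unitDisk : IsPreconnected unitDisk :=
  (convex_ball (0 : ℂ) 1).isPreconnected

lemma blaschke_denom_ne {a z : ℂ} (ha : ‖a‖ < 1) (hz : ‖z‖ < 1) :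
    1 - (starRingEnd ℂ) a * z ≠ 0 := by
  intro hcon
  have h1 : (1 : ℂ) = (starRingEnd ℂ) a * z := by linear_combination hcon
  have h2 := congrArg (‖·‖) h1
  rw [norm_mul, norm_one, Complex.norm_conj] at h2
  nlinarith [norm_nonneg a, norm_nonneg z]

lemma normSq_identity (a z : ℂ) :
    Complex.normSq (1 - (starRingEnd ℂ) a * z) - Complex.normSq (a - z)
      = (1 - Complex.normSq a) * (1 - Complex.normSq z) := by
  simp only [Complex.normSq_apply, Complex.sub_re, Complex.sub_im, Complex.mul_re,
    Complex.mul_im, Complex.one_re, Complex.one_im, Complex.conj_re, Complex.conj_im]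
  ring

lemma abs_blaschkeFactor (a z : ℂ) (ha : a ≠ 0) :
    ‖blaschkeFactor a z‖
      = ‖a - z‖ / ‖1 - (starRingEnd ℂ) a * z‖ := by
  have h0 : ‖a‖ ≠ 0 := norm_ne_zero_iff.mpr ha
  rw [blaschkeFactor, if_neg ha, norm_mul, norm_div, norm_div, Complex.norm_of_nonneg (norm_nonneg a),
    div_self h0, one_mul]

lemma abs_blaschkeFactor_le_one {a z : ℂ} (ha : ‖a‖ < 1)
    (hz : ‖z‖ < 1) : ‖blaschkeFactor a z‖ ≤ 1 := by
  by_cases h0 : a = 0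
  · subst h0; rw [blaschkeFactor, if_pos rfl]; exact hz.le
  · rw [abs_blaschkeFactor a z h0]
    have hden := blaschke_denom_ne ha hz
    have hd1 : 0 < ‖1 - (starRingEnd ℂ) a * z‖ := norm_pos_iff.mpr hden
    rw [div_le_one hd1]
    have hid := normSq_identity a z
    simp only [← Complex.sq_norm] at hid
    have hn1 : (0:ℝ) ≤ 1 - ‖a‖ ^ 2 := by
      nlinarith [norm_nonneg a]
    have hn2 : (0:ℝ) ≤ 1 - ‖z‖ ^ 2 := by
      nlinarith [norm_nonneg z]
    have hsq : ‖a - z‖ ^ 2 ≤ ‖1 - (starRingEnd ℂ) a * z‖ ^ 2 := by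
      nlinarith [mul_nonneg hn1 hn2]
    nlinarith [norm_nonneg (a - z), hd1, hsq]

lemma abs_blaschkeFactor_lower {a z : ℂ} (ha : ‖a‖ < 1)
    (hz : ‖z‖ < 1) :
    1 - 4 / (1 - ‖a‖) * (1 - ‖z‖)
      ≤ ‖blaschkeFactor a z‖ := by
  by_cases h0 : a = 0
  · subst h0
    rw [blaschkeFactor, if_pos rfl]
    simp only [norm_zero, sub_zero]
    have hz0 := norm_nonneg z
    nlinarith
  · rw [abs_blaschkeFactor a z h0]
    set A := ‖a‖ with hA
    set Zr := ‖z‖ with hZr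
    set d1 := ‖1 - (starRingEnd ℂ) a * z‖ with hd1def
    set d2 := ‖a - z‖ with hd2def
    have hA0 : 0 ≤ A := norm_nonneg a
    have hZ0 : 0 ≤ Zr := norm_nonneg z
    have hd20 : 0 ≤ d2 := norm_nonneg (a - z)
    have hden := blaschke_denom_ne ha hz
    have hd1pos : 0 < d1 := norm_pos_iff.mpr hden
    have hid : d1 ^ 2 - d2 ^ 2 = (1 - A ^ 2) * (1 - Zr ^ 2) := by
      have := normSq_identity a z
      simp only [← Complex.sq_norm] at this
      exact this
    have h1A : 0 < 1 - A := by linarith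
    have hd1low : 1 - A ≤ d1 := by
      have htri : ‖(1 : ℂ)‖ - ‖(starRingEnd ℂ) a * z‖ ≤ ‖1 - (starRingEnd ℂ) a * z‖ :=
        norm_sub_norm_le _ _
      have habsz : ‖(starRingEnd ℂ) a * z‖ = A * Zr := by
        rw [norm_mul]
        simp [Complex.norm_conj, hA, hZr]
      rw [norm_one, habsz] at htri
      have : A * Zr ≤ A := by nlinarith
      calc 1 - A ≤ 1 - A * Zr := by linarith
        _ ≤ ‖1 - (starRingEnd ℂ) a * z‖ := htri
        _ = d1 := by rfl
    have hn1 : (0:ℝ) ≤ 1 - A ^ 2 := by nlinarith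
    have hn2 : (0:ℝ) ≤ 1 - Zr ^ 2 := by nlinarith
    have hd2led1 : d2 ≤ d1 := by nlinarith [mul_nonneg hn1 hn2]
    have hfac : (d1 - d2) * (d1 + d2) = (1 - A ^ 2) * (1 - Zr ^ 2) := by linarith [hid, sq_nonneg d1]
    have hsum : 1 - A ≤ d1 + d2 := by linarith
    have hrhs : (1 - A ^ 2) * (1 - Zr ^ 2) ≤ (1 - A) * (4 * (1 - Zr)) := by
      have b1 : (1 - Zr) * (1 + Zr) ≤ (1 - Zr) * 2 :=
        mul_le_mul_of_nonneg_left (by linarith) (by linarith)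
      have b2 : (1 - A) * (1 + A) ≤ (1 - A) * 2 :=
        mul_le_mul_of_nonneg_left (by linarith) (by linarith)
      calc (1 - A ^ 2) * (1 - Zr ^ 2)
          = ((1 - A) * (1 + A)) * ((1 - Zr) * (1 + Zr)) := by ring
        _ ≤ ((1 - A) * 2) * ((1 - Zr) * 2) :=
            mul_le_mul b2 b1 (mul_nonneg (by linarith) (by linarith)) (by linarith)
        _ = (1 - A) * (4 * (1 - Zr)) := by ring
    have key : d1 - d2 ≤ 4 * (1 - Zr) := by
      nlinarith [hfac, hrhs, mul_le_mul_of_nonneg_left hsum (by linarith : (0:ℝ) ≤ 4 * (1 - Zr))]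
    have P : (1 - A) * (d1 - d2) ≤ 4 * (1 - Zr) * d1 := by nlinarith
    have e2 : ((1 - A) - 4 * (1 - Zr)) / (1 - A) ≤ d2 / d1 := by
      rw [div_le_div_iff₀ h1A hd1pos]
      nlinarith [P]
    have e1 : 1 - 4 / (1 - A) * (1 - Zr) = ((1 - A) - 4 * (1 - Zr)) / (1 - A) := by
      field_simp
    rw [e1]
    exact e2

lemma one_sub_sum_le_prod {ι : Type*} (s : Finset ι) (x d : ι → ℝ) :
    (∀ i ∈ s, 0 ≤ x i) → (∀ i ∈ s, x i ≤ 1) → (∀ i ∈ s, 0 ≤ d i) →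
    (∀ i ∈ s, 1 - d i ≤ x i) →
    1 - ∑ i ∈ s, d i ≤ ∏ i ∈ s, x i := by
  classical
  induction s using Finset.cons_induction with
  | empty => intro _ _ _ _; simp
  | cons a s ha ih =>
    intro hx0 hx1 hd0 hxd
    rw [Finset.prod_cons, Finset.sum_cons]
    have IH := ih (fun i hi => hx0 i (Finset.mem_cons_of_mem hi))
      (fun i hi => hx1 i (Finset.mem_cons_of_mem hi))
      (fun i hi => hd0 i (Finset.mem_cons_of_mem hi))
      (fun i hi => hxd i (Finset.mem_cons_of_mem hi))
    have hP0 : 0 ≤ ∏ i ∈ s, x i :=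
      Finset.prod_nonneg fun i hi => hx0 i (Finset.mem_cons_of_mem hi)
    have hP1 : ∏ i ∈ s, x i ≤ 1 :=
      Finset.prod_le_one (fun i hi => hx0 i (Finset.mem_cons_of_mem hi))
        (fun i hi => hx1 i (Finset.mem_cons_of_mem hi))
    have hS0 : 0 ≤ ∑ i ∈ s, d i :=
      Finset.sum_nonneg fun i hi => hd0 i (Finset.mem_cons_of_mem hi)
    have hxa0 : 0 ≤ x a := hx0 a (Finset.mem_cons_self a s)
    have hxa1 : x a ≤ 1 := hx1 a (Finset.mem_cons_self a s)
    have hxda : 1 - d a ≤ x a := hxd a (Finset.mem_cons_self a s)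
    nlinarith [mul_nonneg hxa0 (by linarith : (0:ℝ) ≤ (∏ i ∈ s, x i) - (1 - ∑ i ∈ s, d i)),
      mul_nonneg (by linarith : (0:ℝ) ≤ 1 - x a) hS0]

lemma abs_prod_blaschke_le_one {N : ℕ} (a : Fin N → ℂ) (ha : ∀ i, a i ∈ unitDisk)
    {z : ℂ} (hz : z ∈ unitDisk) :
    ‖∏ i, blaschkeFactor (a i) z‖ ≤ 1 := by
  rw [norm_prod]
  exact Finset.prod_le_one (fun i _ => norm_nonneg _)
    (fun i _ => abs_blaschkeFactor_le_one (mem_unitDisk_iff.mp (ha i)) (mem_unitDisk_iff.mp hz))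

lemma abs_prod_blaschke_lower {N : ℕ} (a : Fin N → ℂ) (ha : ∀ i, a i ∈ unitDisk)
    {z : ℂ} (hz : z ∈ unitDisk) :
    1 - (∑ i, 4 / (1 - ‖a i‖)) * (1 - ‖z‖)
      ≤ ‖∏ i, blaschkeFactor (a i) z‖ := by
  rw [norm_prod]
  have hz1 : ‖z‖ < 1 := mem_unitDisk_iff.mp hz
  have hz0 : 0 ≤ 1 - ‖z‖ := by linarith
  have := one_sub_sum_le_prod Finset.univ
    (fun i => ‖blaschkeFactor (a i) z‖)
    (fun i => 4 / (1 - ‖a i‖) * (1 - ‖z‖))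
    (fun i _ => norm_nonneg _)
    (fun i _ => abs_blaschkeFactor_le_one (mem_unitDisk_iff.mp (ha i)) hz1)
    (fun i _ => by
      have hai := mem_unitDisk_iff.mp (ha i)
      have h4 : (0:ℝ) ≤ 4 / (1 - ‖a i‖) :=
        div_nonneg (by norm_num) (by linarith)
      exact mul_nonneg h4 hz0)
    (fun i _ => abs_blaschkeFactor_lower (mem_unitDisk_iff.mp (ha i)) hz1)
  rwa [← Finset.sum_mul] at this

lemma prod_blaschke_near_one {N : ℕ} (a : Fin N → ℂ) (ha : ∀ i, a i ∈ unitDisk)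
    {δ : ℝ} (hδ : 0 < δ) :
    ∃ r : ℝ, 0 ≤ r ∧ r < 1 ∧ ∀ z ∈ unitDisk, r ≤ ‖z‖ →
      1 - δ ≤ ‖∏ i, blaschkeFactor (a i) z‖ := by
  set K : ℝ := ∑ i, 4 / (1 - ‖a i‖) with hK
  have hK0 : 0 ≤ K := Finset.sum_nonneg fun i _ => by
    have hai := mem_unitDisk_iff.mp (ha i)
    exact div_nonneg (by norm_num) (by linarith)
  refine ⟨max 0 (1 - δ / (K + 1)), le_max_left _ _, ?_, ?_⟩
  · apply max_lt (by norm_num)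
    have : 0 < δ / (K + 1) := by positivity
    linarith
  · intro z hz hrz
    have h1 : 1 - δ / (K + 1) ≤ ‖z‖ := le_trans (le_max_right _ _) hrz
    have h2 : 1 - ‖z‖ ≤ δ / (K + 1) := by linarith
    have h3 : K * (1 - ‖z‖) ≤ K * (δ / (K + 1)) := by
      apply mul_le_mul_of_nonneg_left h2 hK0
    have h4 : K * (δ / (K + 1)) ≤ δ := by
      rw [mul_div_assoc']
      rw [div_le_iff₀ (by linarith : (0:ℝ) < K + 1)]
      nlinarith
    have := abs_prod_blaschke_lower a ha hz
    linarith

/-- The nonvanishing cofactor of a Blaschke factor: `blaschkeFactor a z = (z - a) * blaschkeW a z`. -/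
def blaschkeW (a z : ℂ) : ℂ :=
  if a = 0 then 1 else -(((‖a‖ : ℂ) / a) / (1 - (starRingEnd ℂ) a * z))

lemma blaschkeFactor_eq_mul {a z : ℂ} (ha : ‖a‖ < 1)
    (hz : ‖z‖ < 1) :
    blaschkeFactor a z = (z - a) * blaschkeW a z := by
  by_cases h0 : a = 0
  · subst h0; simp [blaschkeFactor, blaschkeW]
  · have hden := blaschke_denom_ne ha hz
    rw [blaschkeFactor, if_neg h0, blaschkeW, if_neg h0]
    field_simp
    ring

lemma blaschkeW_ne {a z : ℂ} (ha : ‖a‖ < 1) (hz : ‖z‖ < 1) :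
    blaschkeW a z ≠ 0 := by
  by_cases h0 : a = 0
  · subst h0; simp [blaschkeW]
  · have hden := blaschke_denom_ne ha hz
    rw [blaschkeW, if_neg h0]
    have h1 : ((‖a‖ : ℂ) / a) ≠ 0 := by
      apply div_ne_zero _ h0
      simpa using norm_ne_zero_iff.mpr h0
    exact neg_ne_zero.mpr (div_ne_zero h1 hden)

lemma blaschkeW_differentiableOn {a : ℂ} (ha : ‖a‖ < 1) :
    DifferentiableOn ℂ (fun z => blaschkeW a z) unitDisk := by
  by_cases h0 : a = 0
  · subst h0; simp only [blaschkeW, if_pos rfl]; exact differentiableOn_const 1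
  · simp only [blaschkeW, if_neg h0]
    apply DifferentiableOn.neg
    apply DifferentiableOn.div (differentiableOn_const _)
    · exact (differentiableOn_const _).sub
        ((differentiable_id.const_mul _).differentiableOn)
    · intro z hz
      exact blaschke_denom_ne ha (mem_unitDisk_iff.mp hz)

lemma blaschkeFactor_differentiableOn {a : ℂ} (ha : ‖a‖ < 1) :
    DifferentiableOn ℂ (fun z => blaschkeFactor a z) unitDisk := by
  have : ∀ z ∈ unitDisk, blaschkeFactor a z = (z - a) * blaschkeW a z := fun z hz =>
    blaschkeFactor_eq_mul ha (mem_unitDisk_iff.mp hz)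
  apply DifferentiableOn.congr _ this
  exact ((differentiable_id.sub_const a).differentiableOn).mul (blaschkeW_differentiableOn ha)

/-! ### Bounds for the limit function -/

section Limits

lemma zeros_finite {f : ℂ → ℂ} (hf : DifferentiableOn ℂ f unitDisk)
    {r₀ : ℝ} (h0 : 0 ≤ r₀) (h1 : r₀ < 1)
    (hne : ∀ z ∈ unitDisk, r₀ ≤ ‖z‖ → f z ≠ 0) :
    {z | z ∈ unitDisk ∧ f z = 0}.Finite := by
  by_contra hinf
  have hinf' : {z | z ∈ unitDisk ∧ f z = 0}.Infinite := hinf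
  have hsub : {z | z ∈ unitDisk ∧ f z = 0} ⊆ closedBall (0 : ℂ) r₀ := by
    intro z hz
    rcases hz with ⟨hzD, hz0⟩
    rw [mem_closedBall, dist_zero_right]
    by_contra hlt
    push_neg at hlt
    exact hne z hzD hlt.le hz0
  obtain ⟨x, hxK, hx⟩ := hinf'.exists_accPt_of_subset_isCompact
    (isCompact_closedBall (0 : ℂ) r₀) hsub
  have hxD : x ∈ unitDisk := by
    rw [mem_unitDisk_iff]
    rw [mem_closedBall, dist_zero_right] at hxK
    linarith
  have hfreq : ∃ᶠ z in nhdsWithin x {x}ᶜ, f z = 0 := by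
    rw [accPt_iff_frequently] at hx
    rw [frequently_nhdsWithin_iff]
    exact hx.mono fun y hy => ⟨hy.2.2, hy.1⟩
  have heq := (hf.analyticOnNhd isOpen_unitDisk).eqOn_zero_of_preconnected_of_frequently_eq_zero
    preconnected_unitDisk hxD hfreq
  have hwD : ((r₀ : ℝ) : ℂ) ∈ unitDisk := by
    rw [mem_unitDisk_iff, Complex.norm_of_nonneg h0]; exact h1
  have hwabs : r₀ ≤ ‖((r₀ : ℝ) : ℂ)‖ := by
    rw [Complex.norm_of_nonneg h0]
  exact hne _ hwD hwabs (heq hwD)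

lemma dslope_iter_factor (b : ℂ) :
    ∀ (m : ℕ) (g : ℂ → ℂ), (∀ k, k < m → (Function.swap dslope b)^[k] g b = 0) →
      ∀ z, g z = (z - b) ^ m * ((Function.swap dslope b)^[m] g) z := by
  intro m
  induction m with
  | zero => intro g _ z; simp
  | succ m ih =>
    intro g hg z
    have hgb : g b = 0 := hg 0 (Nat.succ_pos m)
    have h1 : (z - b) * dslope g b z = g z := by
      have hs := sub_smul_dslope g b z
      rw [smul_eq_mul] at hs
      rw [hs, hgb, sub_zero]
    have h2 := ih (dslope g b) (fun k hk => by
      have := hg (k + 1) (Nat.succ_lt_succ hk)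
      rwa [Function.iterate_succ_apply] at this) z
    rw [Function.iterate_succ_apply]
    calc g z = (z - b) * dslope g b z := h1.symm
      _ = (z - b) * ((z - b) ^ m * ((Function.swap dslope b)^[m] (dslope g b)) z) := by
          rw [← h2]
      _ = (z - b) ^ (m + 1) * ((Function.swap dslope b)^[m] (Function.swap dslope b g)) z := by
          ring_nf
    
lemma dslope_iter_diff {f : ℂ → ℂ} (hf : DifferentiableOn ℂ f unitDisk) {b : ℂ}
    (hb : b ∈ unitDisk) (m : ℕ) :
    DifferentiableOn ℂ ((Function.swap dslope b)^[m] f) unitDisk := by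
  induction m with
  | zero => exact hf
  | succ m ih =>
    rw [Function.iterate_succ_apply']
    exact (Complex.differentiableOn_dslope (isOpen_unitDisk.mem_nhds hb)).mpr ih

lemma extract_zeros : ∀ (n : ℕ) (f : ℂ → ℂ) (S : Finset ℂ),
    DifferentiableOn ℂ f unitDisk →
    (∀ z ∈ unitDisk, f z = 0 → z ∈ S) → S.card ≤ n →
    (∃ r₀ : ℝ, 0 ≤ r₀ ∧ r₀ < 1 ∧ ∀ z ∈ unitDisk, r₀ ≤ ‖z‖ → f z ≠ 0) →
    ∃ (l : List ℂ) (u : ℂ → ℂ),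
      (∀ b ∈ l, b ∈ unitDisk) ∧ DifferentiableOn ℂ u unitDisk ∧
      (∀ z ∈ unitDisk, u z ≠ 0) ∧
      ∀ z ∈ unitDisk, f z = (l.map (fun b => z - b)).prod * u z := by
  intro n
  induction n with
  | zero =>
    intro f S hdiff hzero hcard _
    refine ⟨[], f, by simp, hdiff, ?_, by simp⟩
    intro z hz hfz
    have hzS := hzero z hz hfz
    rw [Nat.le_zero, Finset.card_eq_zero] at hcard
    subst hcard
    simp at hzS
  | succ n ih =>
    intro f S hdiff hzero hcard hbd
    by_cases hv : ∀ z ∈ unitDisk, f z ≠ 0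
    · exact ⟨[], f, by simp, hdiff, hv, by simp⟩
    push_neg at hv
    obtain ⟨b, hbD, hfb⟩ := hv
    obtain ⟨r₀, hr00, hr01, hrne⟩ := hbd
    have hanb : AnalyticAt ℂ f b := hdiff.analyticAt (isOpen_unitDisk.mem_nhds hbD)
    obtain ⟨p, hp⟩ := hanb
    have hpne : p ≠ 0 := by
      intro hp0
      have hev : ∀ᶠ z in nhds b, f z = 0 := hp.locally_zero_iff.mpr hp0
      have hfreq : ∃ᶠ z in nhdsWithin b {b}ᶜ, f z = 0 :=
        (hev.filter_mono nhdsWithin_le_nhds).frequently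
      have heq := (hdiff.analyticOnNhd
        isOpen_unitDisk).eqOn_zero_of_preconnected_of_frequently_eq_zero
        preconnected_unitDisk hbD hfreq
      have hwD : ((r₀ : ℝ) : ℂ) ∈ unitDisk := by
        rw [mem_unitDisk_iff, Complex.norm_of_nonneg hr00]; exact hr01
      have hwabs : r₀ ≤ ‖((r₀ : ℝ) : ℂ)‖ := by
        rw [Complex.norm_of_nonneg hr00]
      exact hrne _ hwD hwabs (heq hwD)
    have hex : ∃ k, (Function.swap dslope b)^[k] f b ≠ 0 :=
      ⟨p.order, hp.iterate_dslope_fslope_ne_zero hpne⟩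
    classical
    set m := Nat.find hex with hm
    have hspec : (Function.swap dslope b)^[m] f b ≠ 0 := Nat.find_spec hex
    have hvan : ∀ k, k < m → (Function.swap dslope b)^[k] f b = 0 := fun k hk =>
      not_not.mp (Nat.find_min hex hk)
    set f₁ := (Function.swap dslope b)^[m] f with hf₁
    have hfact : ∀ z, f z = (z - b) ^ m * f₁ z := dslope_iter_factor b m f hvan
    have hf₁diff : DifferentiableOn ℂ f₁ unitDisk := dslope_iter_diff hdiff hbD m
    have hb_mem_S : b ∈ S := hzero b hbD hfb
    have hcard' : (S.erase b).card ≤ n := by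
      have h1 := Finset.card_erase_of_mem hb_mem_S
      omega
    have hzero' : ∀ z ∈ unitDisk, f₁ z = 0 → z ∈ S.erase b := by
      intro z hzD hz0
      refine Finset.mem_erase.mpr ⟨?_, hzero z hzD ?_⟩
      · rintro rfl; exact hspec hz0
      · rw [hfact z, hz0, mul_zero]
    have hbd' : ∃ r₀ : ℝ, 0 ≤ r₀ ∧ r₀ < 1 ∧
        ∀ z ∈ unitDisk, r₀ ≤ ‖z‖ → f₁ z ≠ 0 :=
      ⟨r₀, hr00, hr01, fun z hzD hzr hz0 =>
        hrne z hzD hzr (by rw [hfact z, hz0, mul_zero])⟩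
    obtain ⟨l, u, hl, hudiff, hune, heq⟩ := ih f₁ (S.erase b) hf₁diff hzero' hcard' hbd'
    refine ⟨List.replicate m b ++ l, u, ?_, hudiff, hune, ?_⟩
    · intro x hx
      rcases List.mem_append.mp hx with hx | hx
      · rw [List.eq_of_mem_replicate hx]; exact hbD
      · exact hl x hx
    · intro z hzD
      rw [List.map_append, List.prod_append, List.map_replicate, List.prod_replicate]
      rw [hfact z, heq z hzD]
      ring

end Limits

/-- The finite Blaschke products form a closed subset of the inner functions in the
`H^∞` norm: if finite Blaschke products `Bₙ` converge to an inner function `h`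
uniformly on `𝔻`, then `h` is a finite Blaschke product. -/
theorem blaschke_closed_in_inner
    (B : ℕ → (ℂ → ℂ)) (h : ℂ → ℂ)
    (hB : ∀ n, IsFiniteBlaschke (B n)) (hh : IsInner h)
    (hconv : ∀ ε : ℝ, 0 < ε → ∀ᶠ n in Filter.atTop,
      ∀ z ∈ unitDisk, ‖B n z - h z‖ ≤ ε) :
    IsFiniteBlaschke h := by
  classical
  have hdiff : DifferentiableOn ℂ h unitDisk := hh.1
  -- |h| ≤ 1 on the disk
  have habs1 : ∀ z ∈ unitDisk, ‖h z‖ ≤ 1 := by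
    intro z hz
    refine le_of_forall_pos_le_add ?_
    intro ε hε
    obtain ⟨n, hn⟩ := (hconv ε hε).exists
    obtain ⟨c, N, a, hc, ha, heqB⟩ := hB n
    have hBz : ‖B n z‖ ≤ 1 := by
      rw [heqB z hz, norm_mul, hc, one_mul]
      exact abs_prod_blaschke_le_one a ha hz
    have htri : ‖h z‖ - ‖B n z‖ ≤ ‖B n z - h z‖ := by
      have h1 := abs_sub_abs_le (h z) (B n z)
      rwa [norm_sub_rev (h z) (B n z)] at h1
    have := hn z hz
    linarith
  -- |h| is close to 1 near the boundary
  have hnear : ∀ ε : ℝ, 0 < ε → ∃ r : ℝ, 0 ≤ r ∧ r < 1 ∧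
      ∀ z ∈ unitDisk, r ≤ ‖z‖ → 1 - ε ≤ ‖h z‖ := by
    intro ε hε
    obtain ⟨n, hn⟩ := (hconv (ε / 2) (by linarith)).exists
    obtain ⟨c, N, a, hc, ha, heqB⟩ := hB n
    obtain ⟨r, hr0, hr1, hrP⟩ := prod_blaschke_near_one a ha (δ := ε / 2) (by linarith)
    refine ⟨r, hr0, hr1, ?_⟩
    intro z hz hrz
    have hBz : 1 - ε / 2 ≤ ‖B n z‖ := by
      rw [heqB z hz, norm_mul, hc, one_mul]
      exact hrP z hz hrz
    have htri : ‖B n z‖ - ‖h z‖ ≤ ‖B n z - h z‖ :=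
      abs_sub_abs_le (B n z) (h z)
    have := hn z hz
    linarith
  -- h does not vanish near the boundary
  obtain ⟨r₀, hr00, hr01, hr0⟩ := hnear (1 / 2) (by norm_num)
  have hbdne : ∀ z ∈ unitDisk, r₀ ≤ ‖z‖ → h z ≠ 0 := by
    intro z hz hrz h0
    have := hr0 z hz hrz
    rw [h0, norm_zero] at this
    linarith
  have hZfin : {z | z ∈ unitDisk ∧ h z = 0}.Finite := zeros_finite hdiff hr00 hr01 hbdne
  obtain ⟨l, u, hl, hudiff, hune, heq⟩ := extract_zeros hZfin.toFinset.card h hZfin.toFinset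
    hdiff (fun z hz h0 => hZfin.mem_toFinset.mpr ⟨hz, h0⟩) le_rfl ⟨r₀, hr00, hr01, hbdne⟩
  set N := l.length with hN
  set a : Fin N → ℂ := fun i => l.get i with haDef
  have haD : ∀ i, a i ∈ unitDisk := fun i => hl _ (l.get_mem i)
  have hlist : ∀ (g : ℂ → ℂ), (l.map g).prod = ∏ i, g (a i) := by
    intro g
    rw [← Fin.prod_univ_fun_getElem l g]
    rfl
  have hlistabs : ∀ i, ‖a i‖ < 1 := fun i => mem_unitDisk_iff.mp (haD i)
  -- the full Blaschke product of the zeros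
  set Φ : ℂ → ℂ := fun z => ∏ i, blaschkeFactor (a i) z with hΦ
  set W : ℂ → ℂ := fun z => ∏ i, blaschkeW (a i) z with hW
  have hPhiW : ∀ z ∈ unitDisk, Φ z = (∏ i, (z - a i)) * W z := by
    intro z hz
    rw [hΦ, hW, ← Finset.prod_mul_distrib]
    exact Finset.prod_congr rfl fun i _ =>
      blaschkeFactor_eq_mul (hlistabs i) (mem_unitDisk_iff.mp hz)
  have hWne : ∀ z ∈ unitDisk, W z ≠ 0 := by
    intro z hz
    exact Finset.prod_ne_zero_iff.mpr fun i _ =>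
      blaschkeW_ne (hlistabs i) (mem_unitDisk_iff.mp hz)
  have hWdiff : DifferentiableOn ℂ W unitDisk := by
    rw [hW]
    apply DifferentiableOn.fun_finsetProd
    intro i _
    exact blaschkeW_differentiableOn (hlistabs i)
  -- the quotient q = h / Φ = u / W
  set q : ℂ → ℂ := fun z => u z / W z with hq
  have hqdiff : DifferentiableOn ℂ q unitDisk := hudiff.div hWdiff hWne
  have hqne : ∀ z ∈ unitDisk, q z ≠ 0 := fun z hz =>
    div_ne_zero (hune z hz) (hWne z hz)
  have hhq : ∀ z ∈ unitDisk, h z = Φ z * q z := by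
    intro z hz
    rw [hPhiW z hz, heq z hz, hlist (fun b => z - b), hq]
    field_simp [hWne z hz]
  -- |q| = 1 everywhere
  have habs0 : (0 : ℂ) ∈ unitDisk := mem_ball_self one_pos
  have key : ∀ z₀ ∈ unitDisk, ‖q z₀‖ = 1 := by
    intro z₀ hz₀
    have hqpos : 0 < ‖q z₀‖ := norm_pos_iff.mpr (hqne z₀ hz₀)
    have main : ∀ ε : ℝ, 0 < ε → ε < 1 →
        1 - ε ≤ ‖q z₀‖ ∧ ‖q z₀‖ ≤ (1 - ε)⁻¹ := by
      intro ε hε hε1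
      obtain ⟨r₁, hr₁0, hr₁1, hhlow⟩ := hnear ε hε
      obtain ⟨r₂, hr₂0, hr₂1, hPlow⟩ := prod_blaschke_near_one a haD hε
      set ρ : ℝ := max (max r₁ r₂) ((‖z₀‖ + 1) / 2) with hρdef
      have hz₀1 : ‖z₀‖ < 1 := mem_unitDisk_iff.mp hz₀
      have hρ1 : ρ < 1 := by
        apply max_lt (max_lt hr₁1 hr₂1)
        linarith
      have hρ0 : 0 < ρ := by
        have h1 : (‖z₀‖ + 1) / 2 ≤ ρ := le_max_right _ _
        have h2 := norm_nonneg z₀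
        linarith
      have hz₀ρ : ‖z₀‖ < ρ := by
        have h1 : (‖z₀‖ + 1) / 2 ≤ ρ := le_max_right _ _
        linarith
      have hballD : ball (0 : ℂ) ρ ⊆ unitDisk := ball_subset_ball hρ1.le
      have hclosD : closedBall (0 : ℂ) ρ ⊆ unitDisk := closedBall_subset_ball hρ1
      have hfrontier : frontier (ball (0 : ℂ) ρ) = sphere (0 : ℂ) ρ :=
        frontier_ball (0 : ℂ) hρ0.ne'
      have hεpos : (0:ℝ) < 1 - ε := by linarith
      -- bounds on the sphere
      have hsphere : ∀ w ∈ sphere (0 : ℂ) ρ,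
          ‖q w‖ ≤ (1 - ε)⁻¹ ∧ ‖q w‖ ≥ 1 - ε := by
        intro w hw
        have hwabs : ‖w‖ = ρ := by
          rw [mem_sphere, dist_zero_right] at hw
          exact hw
        have hwD : w ∈ unitDisk := by rw [mem_unitDisk_iff, hwabs]; exact hρ1
        have hw1 : r₁ ≤ ‖w‖ := by rw [hwabs]; exact le_trans (le_max_left _ _) (le_max_left _ _)
        have hw2 : r₂ ≤ ‖w‖ := by rw [hwabs]; exact le_trans (le_max_right _ _) (le_max_left _ _)
        have hΦlow : 1 - ε ≤ ‖Φ w‖ := hPlow w hwD hw2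
        have hΦup : ‖Φ w‖ ≤ 1 := abs_prod_blaschke_le_one a haD hwD
        have hhlow' : 1 - ε ≤ ‖h w‖ := hhlow w hwD hw1
        have hhup : ‖h w‖ ≤ 1 := habs1 w hwD
        have hqΦ : ‖h w‖ = ‖Φ w‖ * ‖q w‖ := by
          rw [hhq w hwD, norm_mul]
        have hq0 : 0 ≤ ‖q w‖ := norm_nonneg _
        constructor
        · rw [show (1 - ε)⁻¹ = 1 / (1 - ε) by rw [one_div], le_div_iff₀ hεpos]
          nlinarith [hqΦ, hhup, mul_nonneg hq0 (by linarith : (0:ℝ) ≤ ‖Φ w‖ - (1 - ε))]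
        · rw [ge_iff_le]
          nlinarith [hqΦ, hhlow', mul_nonneg hq0 (by linarith : (0:ℝ) ≤ 1 - ‖Φ w‖)]
      -- maximum principle for q
      have hdcc : DiffContOnCl ℂ q (ball (0 : ℂ) ρ) := by
        refine ⟨hqdiff.mono hballD, ?_⟩
        have : closure (ball (0 : ℂ) ρ) = closedBall (0 : ℂ) ρ := closure_ball (0 : ℂ) hρ0.ne'
        rw [this]
        exact (hqdiff.continuousOn).mono hclosD
      have hz₀cl : z₀ ∈ closure (ball (0 : ℂ) ρ) :=
        subset_closure (by rwa [mem_ball, dist_zero_right])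
      have hub : ‖q z₀‖ ≤ (1 - ε)⁻¹ := by
        apply Complex.norm_le_of_forall_mem_frontier_norm_le isBounded_ball hdcc _ hz₀cl
        intro w hw
        rw [hfrontier] at hw
        exact (hsphere w hw).1
      -- maximum principle for q⁻¹
      have hqinvdiff : DifferentiableOn ℂ (fun z => (q z)⁻¹) unitDisk :=
        hqdiff.inv hqne
      have hdcc' : DiffContOnCl ℂ (fun z => (q z)⁻¹) (ball (0 : ℂ) ρ) := by
        refine ⟨hqinvdiff.mono hballD, ?_⟩
        have : closure (ball (0 : ℂ) ρ) = closedBall (0 : ℂ) ρ := closure_ball (0 : ℂ) hρ0.ne'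
        rw [this]
        exact (hqinvdiff.continuousOn).mono hclosD
      have hlb : ‖(q z₀)⁻¹‖ ≤ (1 - ε)⁻¹ := by
        apply Complex.norm_le_of_forall_mem_frontier_norm_le isBounded_ball hdcc' _ hz₀cl
        intro w hw
        rw [hfrontier] at hw
        have hwabs : ‖w‖ = ρ := by
          rw [mem_sphere, dist_zero_right] at hw
          exact hw
        have hwD : w ∈ unitDisk := by rw [mem_unitDisk_iff, hwabs]; exact hρ1
        have := (hsphere w hw).2
        rw [norm_inv]
        have hqwpos : 0 < ‖q w‖ := norm_pos_iff.mpr (hqne w hwD)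
        rw [inv_le_inv₀ hqwpos hεpos]
        exact this
      constructor
      · rw [norm_inv] at hlb
        rw [inv_le_inv₀ hqpos hεpos] at hlb
        exact hlb
      · exact hub
    set x := ‖q z₀‖ with hx
    have hge : 1 ≤ x := by
      by_contra hlt
      push_neg at hlt
      have hx0 : 0 < x := hqpos
      have hε : 0 < (1 - x) / 2 := by linarith
      have hε1 : (1 - x) / 2 < 1 := by linarith
      have := (main ((1 - x) / 2) hε hε1).1
      linarith
    have hle : x ≤ 1 := by
      by_contra hlt
      push_neg at hlt
      set ε := (1 - 1 / x) / 2 with hεdef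
      have hx0 : 0 < x := hqpos
      have hinv : 1 / x < 1 := by
        rw [div_lt_one hx0]; exact hlt
      have hinvpos : 0 < 1 / x := by positivity
      have hε : 0 < ε := by rw [hεdef]; linarith
      have hε1 : ε < 1 := by rw [hεdef]; linarith
      have hmain := (main ε hε hε1).2
      have h1e : 1 - ε = (x + 1) / (2 * x) := by
        rw [hεdef]; field_simp; ring
      rw [h1e] at hmain
      have hx1pos : 0 < x + 1 := by linarith
      have : ((x + 1) / (2 * x))⁻¹ = 2 * x / (x + 1) := by
        rw [inv_div]
      rw [this] at hmain
      have h2 : 2 * x / (x + 1) < x := by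
        rw [div_lt_iff₀ hx1pos]
        nlinarith
      linarith
    linarith
  -- q is constant by the maximum modulus principle
  have hmax : IsMaxOn (norm ∘ q) unitDisk 0 := by
    intro z hz
    simp only [Set.mem_setOf_eq, Function.comp_apply]
    rw [key z hz, key 0 habs0]
  have hconst := Complex.eqOn_of_isPreconnected_of_isMaxOn_norm preconnected_unitDisk
    isOpen_unitDisk hqdiff habs0 hmax
  refine ⟨q 0, N, a, key 0 habs0, haD, ?_⟩
  intro z hz
  have hcz : q z = q 0 := hconst hz
  rw [hhq z hz, hcz]
  ring
end
end
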